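/- Let W be a finite-dimensional irreducible representation of an sl₂-triple (X,H,Y) (i.e. [X,Y]=H, [H,X]=2X, [H,Y]=−2Y). Let W⁻ be the sum of strictly negative eigenspaces of H and W⁺ the sum of strictly positive eigenspaces, and let π₊: W → W⁺ be the projection parallel to the eigenspaces of H. Then for any nonzero v ∈ W⁻ one has π₊(exp(X)·v) ≠ 0. -/

import Mathlib

/-- The exponential of an endomorphism `X` of a finite-dimensional space,
as the finite sum `∑_{i < n} X^i / i!`; this equals `exp X` whenever `X^n = 0`
(in particular for nilpotent `X` of an `n`-dimensional space). -/
noncomputable def expNil {W : Type*} [AddCommGroup W] [Module ℝ W]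
    (n : ℕ) (X : Module.End ℝ W) : Module.End ℝ W :=
  ∑ i ∈ Finset.range n, ((i.factorial : ℝ)⁻¹) • X ^ i

private lemma sl2aux_expNil {W : Type*} [AddCommGroup W] [Module ℝ W] [FiniteDimensional ℝ W]
    (X : Module.End ℝ W) (n : ℕ) (w : ℕ → W)
    (hXw : ∀ k : ℕ, X (w (k + 1)) = (((k : ℝ) + 1) * ((n : ℝ) - k)) • w k)
    (hXw0 : X (w 0) = 0)
    (hrank : Module.finrank ℝ W = n + 1) :
    ∀ k ≤ n, expNil (Module.finrank ℝ W + 1) X (w k)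
      = ∑ m ∈ Finset.range (k + 1),
        ((((k - m).factorial : ℝ))⁻¹
          * ((k.descFactorial (k - m) * (n - m).descFactorial (k - m) : ℕ) : ℝ)) • w m := by
  have hXpow : ∀ j k, j ≤ k → k ≤ n → (X ^ j) (w k)
      = ((k.descFactorial j * (n - (k - j)).descFactorial j : ℕ) : ℝ) • w (k - j) := by
    intro j
    induction j with
    | zero => intro k _ _; simp
    | succ j ih =>
      intro k hjk hkn
      have hj : j ≤ k := by omega
      rw [pow_succ', Module.End.mul_apply, ih k hj hkn, map_smul]
      obtain ⟨m, hm⟩ : ∃ m, k - j = m + 1 := ⟨k - (j + 1), by omega⟩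
      rw [hm, hXw, smul_smul]
      have hm2 : k - (j + 1) = m := by omega
      rw [hm2]
      congr 1
      have c2 : ((n : ℝ) - (m : ℝ)) = ((n - m : ℕ) : ℝ) := by
        rw [Nat.cast_sub (by omega : m ≤ n)]
      have d1 : k.descFactorial (j + 1) = (m + 1) * k.descFactorial j := by
        rw [Nat.descFactorial_succ, hm]
      have d2 : (n - m).descFactorial (j + 1) = (n - m) * (n - (m + 1)).descFactorial j := by
        have h5 : n - m = (n - (m + 1)) + 1 := by omega
        rw [h5, Nat.succ_descFactorial_succ]
      rw [d1, d2, c2]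
      push_cast
      ring
  have hXzero : ∀ k ≤ n, ∀ j, k < j → (X ^ j) (w k) = 0 := by
    intro k hk j hj
    have hXk1 : (X ^ (k + 1)) (w k) = 0 := by
      rw [pow_succ', Module.End.mul_apply, hXpow k k le_rfl hk, map_smul]
      simp [Nat.sub_self, hXw0]
    have : j = (j - (k + 1)) + (k + 1) := by omega
    rw [this, pow_add, Module.End.mul_apply, hXk1, map_zero]
  intro k hk
  have happ : expNil (Module.finrank ℝ W + 1) X (w k)
      = ∑ j ∈ Finset.range (Module.finrank ℝ W + 1), ((j.factorial : ℝ)⁻¹) • (X ^ j) (w k) := by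
    simp [expNil, LinearMap.sum_apply, LinearMap.smul_apply]
  rw [happ,
    ← Finset.sum_subset (Finset.range_subset_range.mpr (by omega : k + 1 ≤ Module.finrank ℝ W + 1))
      (fun x _ hx => by
        rw [Finset.mem_range, not_lt] at hx
        rw [hXzero k hk x (by omega), smul_zero]),
    ← Finset.sum_range_reflect]
  refine Finset.sum_congr rfl fun m hm => ?_
  rw [Finset.mem_range] at hm
  have e3 : k + 1 - 1 - m = k - m := by omega
  rw [e3, hXpow (k - m) k (by omega) hk, smul_smul]
  have e4 : k - (k - m) = m := by omega
  rw [e4]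

private lemma sl2aux_extract {W : Type*} [AddCommGroup W] [Module ℝ W] [FiniteDimensional ℝ W]
    (n : ℕ) (b : Module.Basis (Fin (n + 1)) ℝ W) (w : ℕ → W) (hb : ∀ k : Fin (n + 1), b k = w k)
    (πpos : W →ₗ[ℝ] W) (hπw : ∀ m ≤ n, πpos (w m) = if 2 * m < n then w m else 0)
    (E : W →ₗ[ℝ] W) (coef : ℕ → ℕ → ℝ)
    (hexp : ∀ k ≤ n, E (w k) = ∑ m ∈ Finset.range (k + 1), coef k m • w m)
    (v : W) (hc : ∀ k : Fin (n + 1), 2 * (k : ℕ) ≤ n → b.repr v k = 0)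
    (hcontra : πpos (E v) = 0) :
    ∀ m₀ : ℕ, m₀ < n - n / 2 →
      (∑ k ∈ Finset.univ.filter (fun k : Fin (n + 1) => n < 2 * (k : ℕ)),
        b.repr v k * coef (k : ℕ) m₀) = 0 := by
  classical
  set M := n - n / 2 with hM
  set S : Finset (Fin (n + 1)) := Finset.univ.filter (fun k : Fin (n + 1) => n < 2 * (k : ℕ))
    with hS
  have hvsum : v = ∑ k ∈ S, b.repr v k • w k := by
    conv_lhs => rw [← b.sum_repr v]
    rw [← Finset.sum_subset (Finset.subset_univ S) (fun k _ hk => by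
      rw [hc k (by simpa [hS] using hk : 2 * (k : ℕ) ≤ n), zero_smul])]
    exact Finset.sum_congr rfl fun k _ => by rw [hb]
  have hkey : πpos (E v) = ∑ m ∈ Finset.range M, (∑ k ∈ S, b.repr v k * coef (k : ℕ) m) • w m := by
    conv_lhs => rw [hvsum]
    rw [map_sum, map_sum]
    have step1 : ∀ k ∈ S, πpos (E (b.repr v k • w k))
        = b.repr v k • ∑ m ∈ Finset.range M, coef (k : ℕ) m • w m := by
      intro k hk
      rw [hS, Finset.mem_filter] at hk
      have hkS : n < 2 * (k : ℕ) := hk.2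
      have hkn : (k : ℕ) ≤ n := by have := k.isLt; omega
      rw [map_smul, map_smul, hexp (k : ℕ) hkn, map_sum]
      congr 1
      have : ∀ m ∈ Finset.range ((k : ℕ) + 1), πpos (coef (k : ℕ) m • w m)
          = if 2 * m < n then coef (k : ℕ) m • w m else 0 := by
        intro m hm
        rw [Finset.mem_range] at hm
        rw [map_smul, hπw m (by omega), smul_ite, smul_zero]
      rw [Finset.sum_congr rfl this, ← Finset.sum_filter]
      refine Finset.sum_congr ?_ fun m _ => rfl
      ext m
      simp only [Finset.mem_filter, Finset.mem_range, hM]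
      omega
    rw [Finset.sum_congr rfl step1]
    simp_rw [Finset.smul_sum, smul_smul]
    rw [Finset.sum_comm]
    exact Finset.sum_congr rfl fun m _ => (Finset.sum_smul).symm
  intro m₀ hm₀
  have hm₀n : m₀ < n + 1 := by omega
  have h0 : ∑ m ∈ Finset.range M, (∑ k ∈ S, b.repr v k * coef (k : ℕ) m) • w m = 0 := by
    rw [← hkey]; exact hcontra
  have h1 := congrArg (fun u => b.repr u (⟨m₀, hm₀n⟩ : Fin (n + 1))) h0
  simp only [map_sum, map_smul, Finsupp.smul_apply, smul_eq_mul, map_zero, Finsupp.zero_apply,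
    Finsupp.finset_sum_apply] at h1
  have hrepr : ∀ m ∈ Finset.range M, (b.repr (w m)) (⟨m₀, hm₀n⟩ : Fin (n + 1))
      = if m = m₀ then (1 : ℝ) else 0 := by
    intro m hm
    rw [Finset.mem_range] at hm
    have hmn1 : m < n + 1 := by omega
    rw [← hb ⟨m, hmn1⟩, b.repr_self, Finsupp.single_apply]
    simp [Fin.ext_iff]
  have h2 : ∑ m ∈ Finset.range M, (∑ k ∈ S, b.repr v k * coef (k : ℕ) m)
      * (if m = m₀ then (1 : ℝ) else 0) = 0 := by
    have hcongr : (∑ m ∈ Finset.range M, (∑ k ∈ S, b.repr v k * coef (k : ℕ) m)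
        * (b.repr (w m)) (⟨m₀, hm₀n⟩ : Fin (n + 1)))
        = ∑ m ∈ Finset.range M, (∑ k ∈ S, b.repr v k * coef (k : ℕ) m)
          * (if m = m₀ then (1 : ℝ) else 0) :=
      Finset.sum_congr rfl fun m hm => by rw [hrepr m hm]
    exact hcongr.symm.trans h1
  simp only [mul_ite, mul_one, mul_zero] at h2
  rw [Finset.sum_ite_eq' (Finset.range M) m₀] at h2
  simpa [Finset.mem_range, hm₀] using h2

open Polynomial in
private lemma sl2aux_vandermonde (n : ℕ) (c : Fin (n + 1) → ℝ)
    (coef : ℕ → ℕ → ℝ)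
    (hcoefdef : ∀ k m : ℕ, coef k m
      = (((k - m).factorial : ℝ))⁻¹
        * ((k.descFactorial (k - m) * (n - m).descFactorial (k - m) : ℕ) : ℝ))
    (hA : ∀ m : ℕ, m < n - n / 2 →
      (∑ k ∈ Finset.univ.filter (fun k : Fin (n + 1) => n < 2 * (k : ℕ)), c k * coef (k : ℕ) m) = 0)
    (k₀ : Fin (n + 1)) (hk₀S : n < 2 * (k₀ : ℕ)) (hck₀ : c k₀ ≠ 0) : False := by
  classical
  set M := n - n / 2 with hM
  set S : Finset (Fin (n + 1)) := Finset.univ.filter (fun k : Fin (n + 1) => n < 2 * (k : ℕ)) with hS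
  have natid : ∀ k m : ℕ, m ≤ k → k ≤ n →
      k.descFactorial (k - m) * (n - m).descFactorial (k - m) * ((n - k).factorial * m.factorial)
        = k.descFactorial m * (n - m).factorial * (k - m).factorial := by
    intro k m hmk hkn
    rw [Nat.descFactorial_eq_factorial_mul_choose k (k - m),
      Nat.descFactorial_eq_factorial_mul_choose (n - m) (k - m),
      Nat.descFactorial_eq_factorial_mul_choose k m,
      Nat.choose_symm hmk]
    have hfact : (n - m).choose (k - m) * (k - m).factorial * (n - k).factorial
        = (n - m).factorial := by
      have h1 : (k - m) ≤ (n - m) := by omega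
      have h2 : (n - m) - (k - m) = n - k := by omega
      have := Nat.choose_mul_factorial_mul_factorial h1
      rwa [h2] at this
    rw [← hfact]; ring
  have hcoef : ∀ k m : ℕ, m ≤ k → k ≤ n →
      coef k m = ((k.descFactorial m : ℕ) : ℝ) * (((n - k).factorial : ℝ))⁻¹
        * (((n - m).factorial : ℝ)) * ((m.factorial : ℝ))⁻¹ := by
    intro k m hmk hkn
    rw [hcoefdef]
    have f1 : (((k - m).factorial : ℕ) : ℝ) ≠ 0 := Nat.cast_ne_zero.mpr (Nat.factorial_ne_zero _)
    have f2 : (((n - k).factorial : ℕ) : ℝ) ≠ 0 := Nat.cast_ne_zero.mpr (Nat.factorial_ne_zero _)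
    have f3 : ((m.factorial : ℕ) : ℝ) ≠ 0 := Nat.cast_ne_zero.mpr (Nat.factorial_ne_zero _)
    field_simp
    have hcast := congrArg (Nat.cast : ℕ → ℝ) (natid k m hmk hkn)
    push_cast at hcast ⊢
    linear_combination hcast
  have hA2 : ∀ m : ℕ, m < M →
      (∑ k ∈ S, (c k * (((n - (k : ℕ)).factorial : ℝ))⁻¹)
        * (((k : ℕ).descFactorial m : ℕ) : ℝ)) = 0 := by
    intro m hm
    have h0 := hA m hm
    have hconst : (((n - m).factorial : ℝ)) * ((m.factorial : ℝ))⁻¹ ≠ 0 := by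
      apply mul_ne_zero (Nat.cast_ne_zero.mpr (Nat.factorial_ne_zero _))
      exact inv_ne_zero (Nat.cast_ne_zero.mpr (Nat.factorial_ne_zero _))
    have hsum : (∑ k ∈ S, (c k * (((n - (k : ℕ)).factorial : ℝ))⁻¹)
          * (((k : ℕ).descFactorial m : ℕ) : ℝ))
        * ((((n - m).factorial : ℝ)) * ((m.factorial : ℝ))⁻¹)
        = ∑ k ∈ S, c k * coef (k : ℕ) m := by
      rw [Finset.sum_mul]
      refine Finset.sum_congr rfl fun k hk => ?_
      rw [hS, Finset.mem_filter] at hk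
      have hkS : n < 2 * (k : ℕ) := hk.2
      have hmk : m ≤ (k : ℕ) := by omega
      have hkn : (k : ℕ) ≤ n := by have := k.isLt; omega
      rw [hcoef (k : ℕ) m hmk hkn]
      ring
    have h2 : (∑ k ∈ S, (c k * (((n - (k : ℕ)).factorial : ℝ))⁻¹)
          * (((k : ℕ).descFactorial m : ℕ) : ℝ))
        * ((((n - m).factorial : ℝ)) * ((m.factorial : ℝ))⁻¹) = 0 := by rw [hsum]; exact h0
    rcases mul_eq_zero.mp h2 with h | h
    · exact h
    · exact absurd h hconst
  have hglt : ∀ i : Fin M, n / 2 + 1 + (i : ℕ) < n + 1 := by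
    intro i; have := i.isLt; omega
  set g : Fin M → Fin (n + 1) := fun i => ⟨n / 2 + 1 + (i : ℕ), hglt i⟩ with hg
  set e : Fin M → ℝ := fun i => c (g i) * (((n - (g i : ℕ)).factorial : ℝ))⁻¹ with he
  have hA3 : ∀ m : ℕ, m < M →
      (∑ i : Fin M, e i * (((g i : ℕ).descFactorial m : ℕ) : ℝ)) = 0 := by
    intro m hm
    rw [← hA2 m hm]
    refine Finset.sum_bij' (fun i _ => g i) (fun k hk => (⟨(k : ℕ) - (n / 2 + 1), by
      rw [hS, Finset.mem_filter] at hk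
      have := k.isLt
      omega⟩ : Fin M)) ?_ ?_ ?_ ?_ ?_
    · intro i _
      rw [hS, Finset.mem_filter]
      refine ⟨Finset.mem_univ _, ?_⟩
      simp only [hg]
      omega
    · intro k hk; exact Finset.mem_univ _
    · intro i _
      ext
      simp only [hg]
      omega
    · intro k hk
      rw [hS, Finset.mem_filter] at hk
      ext
      simp only [hg]
      have := hk.2
      omega
    · intro i _
      rfl
  have hnode : Function.Injective (fun i : Fin M => ((n / 2 + 1 + (i : ℕ) : ℕ) : ℝ)) := by
    intro i j hij
    simp only at hij
    have : (n / 2 + 1 + (i : ℕ) : ℕ) = (n / 2 + 1 + (j : ℕ) : ℕ) := Nat.cast_injective hij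
    ext; omega
  have hdet : (Matrix.of (fun i j : Fin M =>
      (descPochhammer ℝ (j : ℕ)).eval (((n / 2 + 1 + (i : ℕ) : ℕ) : ℝ)))).det ≠ 0 := by
    rw [← Matrix.det_eval_matrixOfPolynomials_eq_det_vandermonde _ _
      (fun j => descPochhammer_natDegree ℝ (j : ℕ))
      (fun j => monic_descPochhammer ℝ (j : ℕ))]
    rw [Matrix.det_vandermonde_ne_zero_iff]
    exact hnode
  have hvec : Matrix.vecMul e (Matrix.of (fun i j : Fin M =>
      (descPochhammer ℝ (j : ℕ)).eval (((n / 2 + 1 + (i : ℕ) : ℕ) : ℝ)))) = 0 := by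
    funext j
    have := hA3 (j : ℕ) j.isLt
    rw [Matrix.vecMul, Pi.zero_apply]
    rw [← this]
    simp only [dotProduct, Matrix.of_apply]
    refine Finset.sum_congr rfl fun i _ => ?_
    rw [descPochhammer_eval_eq_descFactorial ℝ (n / 2 + 1 + (i : ℕ)) (j : ℕ)]
  have he0 : e = 0 := Matrix.eq_zero_of_vecMul_eq_zero hdet hvec
  have hi₀lt : (k₀ : ℕ) - (n / 2 + 1) < M := by
    have := k₀.isLt; omega
  have hgi₀ : g ⟨(k₀ : ℕ) - (n / 2 + 1), hi₀lt⟩ = k₀ := by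
    ext; simp only [hg]; omega
  have h9 : e ⟨(k₀ : ℕ) - (n / 2 + 1), hi₀lt⟩ = 0 := by rw [he0]; rfl
  simp only [he] at h9
  rw [hgi₀] at h9
  rcases mul_eq_zero.mp h9 with h | h
  · exact hck₀ h
  · exact (inv_ne_zero (Nat.cast_ne_zero.mpr (Nat.factorial_ne_zero _))) h

/-- Lemma 2.3 of the paper: in a finite-dimensional irreducible representation `W` of an
`sl₂`-triple `(X, H, Y)`, if `v ≠ 0` lies in the sum `W⁻` of the strictly negative
eigenspaces of `H`, and `π₊` is the projection onto the sum of the strictly positive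
eigenspaces of `H` parallel to the eigenspaces of `H`, then `π₊(exp(X) v) ≠ 0`. -/
theorem sl2_exp_pos_projection_ne_zero
    {W : Type*} [AddCommGroup W] [Module ℝ W] [FiniteDimensional ℝ W]
    (X H Y : Module.End ℝ W)
    (hXY : ⁅X, Y⁆ = H) (hHX : ⁅H, X⁆ = 2 • X) (hHY : ⁅H, Y⁆ = -(2 • Y))
    (hirr : ∀ p : Submodule ℝ W, (∀ w ∈ p, X w ∈ p) → (∀ w ∈ p, H w ∈ p) →
      (∀ w ∈ p, Y w ∈ p) → p = ⊥ ∨ p = ⊤)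
    (πpos : W →ₗ[ℝ] W)
    (hπpos : ∀ μ : ℝ, 0 < μ → ∀ w ∈ Module.End.eigenspace H μ, πpos w = w)
    (hπnonpos : ∀ μ : ℝ, μ ≤ 0 → ∀ w ∈ Module.End.eigenspace H μ, πpos w = 0)
    (v : W) (hv : v ∈ ⨆ μ ∈ Set.Iio (0 : ℝ), Module.End.eigenspace H μ) (hv0 : v ≠ 0) :
    πpos (expNil (Module.finrank ℝ W + 1) X v) ≠ 0 := by
  classical
  -- degenerate case `H = 0`
  by_cases hH0 : H = 0
  · exfalso
    apply hv0
    have hbot : (⨆ μ ∈ Set.Iio (0 : ℝ), Module.End.eigenspace H μ) = ⊥ := by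
      rw [eq_bot_iff]
      refine iSup₂_le fun μ hμ => ?_
      intro u hu
      have heq : H u = μ • u := (Module.End.mem_eigenspace_iff).mp hu
      rw [hH0] at heq
      have hμ0 : μ ≠ 0 := ne_of_lt hμ
      have hz : μ • u = 0 := by simpa using heq.symm
      simpa using (smul_eq_zero.mp hz).resolve_left hμ0
    rw [hbot] at hv
    simpa using hv
  -- eigenspace shifting
  have hXeig : ∀ (μ : ℝ) (u : W), u ∈ Module.End.eigenspace H μ →
      X u ∈ Module.End.eigenspace H (μ + 2) := by
    intro μ u hu
    rw [Module.End.mem_eigenspace_iff] at hu ⊢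
    have h1 : H (X u) - X (H u) = 2 • X u := by
      have := congrFun (congrArg DFunLike.coe hHX) u
      simpa [Ring.lie_def, LinearMap.sub_apply] using this
    rw [sub_eq_iff_eq_add] at h1
    rw [h1, hu, map_smul, add_smul]
    simp [two_smul]
    abel
  have hYeig : ∀ (μ : ℝ) (u : W), u ∈ Module.End.eigenspace H μ →
      Y u ∈ Module.End.eigenspace H (μ - 2) := by
    intro μ u hu
    rw [Module.End.mem_eigenspace_iff] at hu ⊢
    have h1 : H (Y u) - Y (H u) = -(2 • Y u) := by
      have := congrFun (congrArg DFunLike.coe hHY) u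
      simpa [Ring.lie_def, LinearMap.sub_apply] using this
    rw [sub_eq_iff_eq_add] at h1
    rw [h1, hu, map_smul, sub_smul]
    simp [two_smul]
    abel
  -- the sum of all eigenspaces is everything
  set V : Submodule ℝ W := ⨆ μ : ℝ, Module.End.eigenspace H μ with hV
  have hvV : v ∈ V := by
    refine (iSup₂_le fun μ _ => le_iSup (fun μ => Module.End.eigenspace H μ) μ : _ ≤ V) hv
  have hVtop : V = ⊤ := by
    have hX : ∀ u ∈ V, X u ∈ V := by
      intro u hu
      refine (iSup_le fun μ u' hu' => ?_ : V ≤ V.comap X) hu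
      exact le_iSup (fun μ => Module.End.eigenspace H μ) (μ + 2) (hXeig μ u' hu')
    have hH : ∀ u ∈ V, H u ∈ V := by
      intro u hu
      refine (iSup_le fun μ u' hu' => ?_ : V ≤ V.comap H) hu
      have heq : H u' = μ • u' := (Module.End.mem_eigenspace_iff).mp hu'
      simp only [Submodule.mem_comap, heq]
      exact Submodule.smul_mem _ _ (le_iSup (fun μ => Module.End.eigenspace H μ) μ hu')
    have hY : ∀ u ∈ V, Y u ∈ V := by
      intro u hu
      refine (iSup_le fun μ u' hu' => ?_ : V ≤ V.comap Y) hu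
      exact le_iSup (fun μ => Module.End.eigenspace H μ) (μ - 2) (hYeig μ u' hu')
    rcases hirr V hX hH hY with h | h
    · exact absurd (h ▸ hvV) (by simpa using hv0)
    · exact h
  -- a primitive vector of maximal eigenvalue
  have hEfin : Set.Finite (Module.End.HasEigenvalue H) := Module.End.finite_hasEigenvalue H
  have hEne : (hEfin.toFinset).Nonempty := by
    rw [Finset.nonempty_iff_ne_empty]
    intro hemp
    have hall : ∀ μ : ℝ, Module.End.eigenspace H μ = ⊥ := by
      intro μ
      by_contra hne
      have : μ ∈ hEfin.toFinset := by
        exact hEfin.mem_toFinset.mpr (hne : Module.End.HasEigenvalue H μ)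
      simp [hemp] at this
    have hVb : V = ⊥ := by
      rw [hV, eq_bot_iff]
      exact iSup_le fun μ => by rw [hall μ]
    rw [hVtop] at hVb
    exact hv0 (by simpa using (hVb ▸ Submodule.mem_top : v ∈ (⊥ : Submodule ℝ W)))
  set lam := hEfin.toFinset.max' hEne with hlam
  have hlamE : Module.End.HasEigenvalue H lam := by
    have := hEfin.toFinset.max'_mem hEne
    exact hEfin.mem_toFinset.mp this
  obtain ⟨w₀, hw₀mem, hw₀ne⟩ := (Submodule.ne_bot_iff _).mp hlamE
  have hXw₀ : X w₀ = 0 := by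
    by_contra hXne
    have hev : Module.End.HasEigenvalue H (lam + 2) :=
      Module.End.hasEigenvalue_of_hasEigenvector ⟨hXeig lam w₀ hw₀mem, hXne⟩
    have : lam + 2 ≤ lam := hEfin.toFinset.le_max' _ (hEfin.mem_toFinset.mpr hev)
    linarith
  -- sl₂ representation theory
  letI : LieRing (Module.End ℝ W) := LieRing.ofAssociativeRing
  have t : IsSl2Triple H X Y := ⟨hH0, hXY, hHX, hHY⟩
  have P : t.HasPrimitiveVectorWith w₀ lam :=
    ⟨hw₀ne, by simpa using (Module.End.mem_eigenspace_iff).mp hw₀mem, by simpa using hXw₀⟩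
  obtain ⟨n, hn⟩ := P.exists_nat
  have htoEnd : LieModule.toEnd ℝ (Module.End ℝ W) W Y = Y := by
    rw [LieModule.toEnd_module_end]; rfl
  set w : ℕ → W := fun k => (Y ^ k) w₀ with hwdef
  have hHw : ∀ k : ℕ, H (w k) = ((n : ℝ) - 2 * k) • w k := by
    intro k
    simp only [hwdef]
    have := P.lie_h_pow_toEnd_f k
    rw [htoEnd] at this
    simpa [hn] using this
  have hYw : ∀ k : ℕ, Y (w k) = w (k + 1) := by
    intro k
    simp only [hwdef, pow_succ', Module.End.mul_apply]
  have hXw : ∀ k : ℕ, X (w (k + 1)) = (((k : ℝ) + 1) * ((n : ℝ) - k)) • w k := by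
    intro k
    simp only [hwdef]
    have := P.lie_e_pow_succ_toEnd_f k
    rw [htoEnd] at this
    simpa [hn] using this
  have hXw0 : X (w 0) = 0 := by simp only [hwdef, pow_zero, Module.End.one_apply]; exact hXw₀
  have hwne : ∀ k ≤ n, w k ≠ 0 := by
    intro k hk
    simp only [hwdef]
    have := P.pow_toEnd_f_ne_zero_of_eq_nat hn hk
    rwa [htoEnd] at this
  have hwzero : w (n + 1) = 0 := by
    simp only [hwdef]
    have := P.pow_toEnd_f_eq_zero_of_eq_nat hn
    rwa [htoEnd] at this
  have hwbig : ∀ k, n < k → w k = 0 := by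
    intro k hk
    have hsplit : k = (k - (n + 1)) + (n + 1) := by omega
    simp only [hwdef] at hwzero ⊢
    rw [hsplit, pow_add, Module.End.mul_apply, hwzero, map_zero]
  -- basis of eigenvectors
  have li : LinearIndependent ℝ (fun k : Fin (n + 1) => w k) := by
    apply Module.End.eigenvectors_linearIndependent' H (fun k : Fin (n + 1) => (n : ℝ) - 2 * k)
    · intro a b' hab
      simp only at hab
      have : (a : ℝ) = (b' : ℝ) := by linarith
      exact Fin.ext (Nat.cast_injective this)
    · intro k
      exact ⟨(Module.End.mem_eigenspace_iff).mpr (hHw k), hwne k (Nat.lt_succ_iff.mp k.isLt)⟩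
  have hspan : ⊤ ≤ Submodule.span ℝ (Set.range fun k : Fin (n + 1) => w k) := by
    set p := Submodule.span ℝ (Set.range fun k : Fin (n + 1) => w k) with hp
    have hwmem : ∀ k : ℕ, w k ∈ p := by
      intro k
      rcases le_or_gt k n with hk | hk
      · exact Submodule.subset_span ⟨⟨k, Nat.lt_succ_of_le hk⟩, rfl⟩
      · rw [hwbig k hk]; exact p.zero_mem
    have hX : ∀ u ∈ p, X u ∈ p := by
      intro u hu
      refine (Submodule.span_le.mpr ?_ : p ≤ p.comap X) hu
      rintro - ⟨⟨k, hk⟩, rfl⟩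
      simp only [SetLike.mem_coe, Submodule.mem_comap]
      match k with
      | 0 => rw [hXw0]; exact p.zero_mem
      | (k + 1) => rw [hXw k]; exact p.smul_mem _ (hwmem k)
    have hH : ∀ u ∈ p, H u ∈ p := by
      intro u hu
      refine (Submodule.span_le.mpr ?_ : p ≤ p.comap H) hu
      rintro - ⟨⟨k, hk⟩, rfl⟩
      simp only [SetLike.mem_coe, Submodule.mem_comap]
      rw [hHw k]; exact p.smul_mem _ (hwmem k)
    have hY : ∀ u ∈ p, Y u ∈ p := by
      intro u hu
      refine (Submodule.span_le.mpr ?_ : p ≤ p.comap Y) hu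
      rintro - ⟨⟨k, hk⟩, rfl⟩
      simp only [SetLike.mem_coe, Submodule.mem_comap]
      rw [hYw k]; exact hwmem (k + 1)
    rcases hirr p hX hH hY with h | h
    · exact absurd (h ▸ hwmem 0) (by simpa using hwne 0 (Nat.zero_le n))
    · exact h.ge
  set b : Module.Basis (Fin (n + 1)) ℝ W := Module.Basis.mk li hspan with hbdef
  have hb : ∀ k : Fin (n + 1), b k = w k := fun k => Module.Basis.mk_apply li hspan k
  have hrank : Module.finrank ℝ W = n + 1 := by
    rw [Module.finrank_eq_card_basis b, Fintype.card_fin]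
  have hreprH : ∀ (u : W) (k : Fin (n + 1)),
      b.repr (H u) k = ((n : ℝ) - 2 * k) * b.repr u k := by
    intro u k
    have hu : H u = ∑ j : Fin (n + 1), (((n : ℝ) - 2 * j) * b.repr u j) • b j := by
      conv_lhs => rw [← b.sum_repr u]
      rw [map_sum]
      refine Finset.sum_congr rfl fun j _ => ?_
      rw [map_smul, hb j, hHw j, smul_smul, mul_comm]
    rw [hu, map_sum]
    simp only [map_smul, Module.Basis.repr_self, Finsupp.smul_single, smul_eq_mul, mul_one]
    rw [Finsupp.finset_sum_apply]
    simp only [Finsupp.single_apply]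
    rw [Finset.sum_ite_eq' Finset.univ k]
    simp
  have hc : ∀ k : Fin (n + 1), 2 * (k : ℕ) ≤ n → b.repr v k = 0 := by
    intro k hk
    let N : Submodule ℝ W :=
      { carrier := {u | ∀ j : Fin (n + 1), 2 * (j : ℕ) ≤ n → b.repr u j = 0}
        add_mem' := fun ha hb' j hj => by
          rw [map_add, Finsupp.add_apply, ha j hj, hb' j hj, add_zero]
        zero_mem' := fun j hj => by simp
        smul_mem' := fun c' a ha j hj => by rw [map_smul, Finsupp.smul_apply, ha j hj, smul_zero] }
    have hsub : (⨆ μ ∈ Set.Iio (0 : ℝ), Module.End.eigenspace H μ) ≤ N := by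
      refine iSup₂_le fun μ hμ => ?_
      intro u hu j hj
      have hμ' : μ < 0 := hμ
      have heq : H u = μ • u := (Module.End.mem_eigenspace_iff).mp hu
      have hj2 := hreprH u j
      rw [heq, map_smul, Finsupp.smul_apply, smul_eq_mul] at hj2
      have hne : ((n : ℝ) - 2 * j) ≠ μ := by
        have h3 : (0 : ℝ) ≤ (n : ℝ) - 2 * j := by
          have h4 : ((2 * (j : ℕ) : ℕ) : ℝ) ≤ (n : ℕ) := Nat.cast_le.mpr hj
          push_cast at h4
          linarith
        linarith
      by_contra hcon
      exact hne (mul_left_cancel₀ hcon (by linarith [hj2]) : _)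
    exact hsub hv k hk
  -- πpos on basis vectors
  have hπw : ∀ m ≤ n, πpos (w m) = if 2 * m < n then w m else 0 := by
    intro m hm
    have hmem : w m ∈ Module.End.eigenspace H ((n : ℝ) - 2 * m) :=
      (Module.End.mem_eigenspace_iff).mpr (hHw m)
    by_cases h : 2 * m < n
    · rw [if_pos h]
      refine hπpos _ ?_ _ hmem
      have h4 : ((2 * m : ℕ) : ℝ) < ((n : ℕ) : ℝ) := Nat.cast_lt.mpr h
      push_cast at h4
      linarith
    · rw [if_neg h]
      refine hπnonpos _ ?_ _ hmem
      have h4 : ((n : ℕ) : ℝ) ≤ ((2 * m : ℕ) : ℝ) := Nat.cast_le.mpr (by omega)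
      push_cast at h4
      linarith
  -- conclusion
  intro hcontra
  have hexp := sl2aux_expNil X n w hXw hXw0 hrank
  have hA := sl2aux_extract n b w hb πpos hπw (expNil (Module.finrank ℝ W + 1) X)
    (fun k m => (((k - m).factorial : ℝ))⁻¹
      * ((k.descFactorial (k - m) * (n - m).descFactorial (k - m) : ℕ) : ℝ))
    hexp v hc hcontra
  obtain ⟨k₀, hck₀⟩ : ∃ k₀ : Fin (n + 1), b.repr v k₀ ≠ 0 := by
    by_contra hall
    push_neg at hall
    apply hv0
    have : b.repr v = 0 := by
      ext j; exact hall j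
    simpa using congrArg (b.repr.symm) this
  have hk₀S : n < 2 * (k₀ : ℕ) := by
    by_contra h
    exact hck₀ (hc k₀ (by omega))
  exact sl2aux_vandermonde n (fun k => b.repr v k)
    (fun k m => (((k - m).factorial : ℝ))⁻¹
      * ((k.descFactorial (k - m) * (n - m).descFactorial (k - m) : ℕ) : ℝ))
    (fun k m => rfl) hA k₀ hk₀S hck₀
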